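/- Let N = p^n M with p prime, gcd(p,M) = 1, n ≥ 2, and let 1 ≤ r ≤ n. A complete set of right coset representatives for Γ_0(N) in Γ_0(p^r M) is given by the identity together with the matrices A_{s,j} = [[a_{s,j}, b_{s,j}],[p^j M, p^{n-j} - s M]] ∈ SL_2(Z), where r ≤ j ≤ n-1 and s ranges over Z_p^* / (1 + p^{n-j} Z_p); in particular [Γ_0(p^r M) : Γ_0(N)] = p^{n-r}. -/

import Mathlib

open Matrix CongruenceSubgroup

open scoped MatrixGroups

section auxstmt14

lemma aux_gamma0_iff_dvd {N : ℕ} {g : SL(2, ℤ)} :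
    g ∈ Gamma0 N ↔ (N : ℤ) ∣ g 1 0 := by
  rw [Gamma0_mem, ZMod.intCast_zmod_eq_zero_iff_dvd]

lemma aux_inv_mul_entry (a b : SL(2, ℤ)) :
    (a⁻¹ * b) 1 0 = a 0 0 * b 1 0 - a 1 0 * b 0 0 := by
  rw [Matrix.SpecialLinearGroup.SL2_inv_expl a]
  have h := (Matrix.two_mul_expl (⟨![![a.1 1 1, -a.1 0 1], ![-a.1 1 0, a.1 0 0]],
    Matrix.SpecialLinearGroup.SL2_inv_expl_det a⟩ : SL(2,ℤ)).1 b.1).2.2.1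
  simp only [Matrix.SpecialLinearGroup.coe_mul] at *
  change (_ * _ : Matrix (Fin 2) (Fin 2) ℤ) 1 0 = _
  rw [h]
  simp
  ring

lemma aux_ratio {m : ℕ} (x y u v : ZMod m) (hy : IsUnit y) (hv : IsUnit v) :
    x * y⁻¹ = u * v⁻¹ ↔ x * v = u * y := by
  constructor
  · intro h
    calc x * v = (x * y⁻¹) * (y * v) := by
          rw [show (x * y⁻¹) * (y * v) = x * (y⁻¹ * y) * v by ring,
            ZMod.inv_mul_of_unit _ hy]; ring
      _ = (u * v⁻¹) * (y * v) := by rw [h]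
      _ = u * y := by
          rw [show (u * v⁻¹) * (y * v) = u * (v⁻¹ * v) * y by ring,
            ZMod.inv_mul_of_unit _ hv]; ring
  · intro h
    calc x * y⁻¹ = x * v * (v⁻¹ * y⁻¹) := by
          rw [show x * v * (v⁻¹ * y⁻¹) = x * (v * v⁻¹) * y⁻¹ by ring,
            ZMod.mul_inv_of_unit _ hv]; ring
      _ = u * y * (v⁻¹ * y⁻¹) := by rw [h]
      _ = u * v⁻¹ := by
          rw [show u * y * (v⁻¹ * y⁻¹) = u * (y * y⁻¹) * v⁻¹ by ring,
            ZMod.mul_inv_of_unit _ hy]; ring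

def auxPsi (p n M r : ℕ) (g : SL(2, ℤ)) : ZMod (p ^ (n - r)) :=
  (((g 1 0 / ((p:ℤ) ^ r * M)) : ℤ) : ZMod (p ^ (n - r))) *
    (((g 0 0 : ℤ)) : ZMod (p ^ (n - r)))⁻¹

lemma aux_unit (p n M r : ℕ) (hp : p.Prime) (hr1 : 1 ≤ r) (g : SL(2, ℤ))
    (hg : ((p:ℤ) ^ r * M) ∣ g 1 0) : IsUnit ((g 0 0 : ℤ) : ZMod (p ^ (n - r))) := by
  have hdet : g 0 0 * g 1 1 - g 0 1 * g 1 0 = 1 := by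
    have h2 := g.2; rw [Matrix.det_fin_two] at h2; exact h2
  have hpg : (p:ℤ) ∣ g 1 0 :=
    dvd_trans (dvd_mul_of_dvd_left (dvd_pow_self _ (by omega)) _) hg
  obtain ⟨t, ht⟩ := hpg
  have hcop : IsCoprime ((g 0 0 : ℤ)) ((p:ℤ)) :=
    ⟨g 1 1, -(g 0 1 * t), by linear_combination hdet + g 0 1 * ht⟩
  obtain ⟨a, b, hab⟩ := hcop.pow_right (n := n - r)
  have h0 : ((p : ZMod (p^(n-r))))^(n-r) = 0 := by
    have h1 : ((p^(n-r) : ℕ) : ZMod (p^(n-r))) = 0 := ZMod.natCast_self _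
    push_cast at h1
    exact_mod_cast h1
  have hcast := congrArg (fun z : ℤ => (z : ZMod (p^(n-r)))) hab
  push_cast at hcast
  rw [h0, mul_zero, add_zero] at hcast
  exact IsUnit.of_mul_eq_one _ (by rw [mul_comm]; exact hcast)

lemma aux_char (p n M r : ℕ) (hp : p.Prime) (hM : 0 < M) (hr1 : 1 ≤ r) (hr2 : r ≤ n)
    (a b : SL(2, ℤ)) (ha : ((p:ℤ) ^ r * M) ∣ a 1 0) (hb : ((p:ℤ) ^ r * M) ∣ b 1 0) :
    auxPsi p n M r a = auxPsi p n M r b ↔ a⁻¹ * b ∈ Gamma0 (p ^ n * M) := by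
  have hp0 : (0:ℤ) < (p:ℤ) := by exact_mod_cast hp.pos
  have hM0 : (0:ℤ) < (M:ℤ) := by exact_mod_cast hM
  have hPrM : ((p:ℤ)^r * M) ≠ 0 := by positivity
  have hpow : (p:ℤ)^r * (p:ℤ)^(n-r) = (p:ℤ)^n := by
    rw [← pow_add, Nat.add_sub_cancel' hr2]
  have hua := aux_unit p n M r hp hr1 a ha
  have hub := aux_unit p n M r hp hr1 b hb
  rw [auxPsi, auxPsi, aux_gamma0_iff_dvd, aux_inv_mul_entry]
  set a' := a 1 0 / ((p:ℤ)^r * M) with ha'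
  set b' := b 1 0 / ((p:ℤ)^r * M) with hb'
  have haa : ((p:ℤ)^r * M) * a' = a 1 0 := Int.mul_ediv_cancel' ha
  have hbb : ((p:ℤ)^r * M) * b' = b 1 0 := Int.mul_ediv_cancel' hb
  rw [aux_ratio _ _ _ _ hua hub,
    ← sub_eq_zero,
    show ((a' : ℤ) : ZMod (p^(n-r))) * ((b 0 0 : ℤ) : ZMod (p^(n-r)))
        - ((b' : ℤ) : ZMod (p^(n-r))) * ((a 0 0 : ℤ) : ZMod (p^(n-r)))
      = ((a' * b 0 0 - b' * a 0 0 : ℤ) : ZMod (p^(n-r))) by push_cast; ring,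
    ZMod.intCast_zmod_eq_zero_iff_dvd]
  constructor
  · rintro ⟨w, hw⟩
    refine ⟨-w, ?_⟩
    push_cast at hw ⊢
    rw [← haa, ← hbb]
    linear_combination (-(p:ℤ)^r * (M:ℤ)) * hw + (-(M:ℤ) * w) * hpow
  · rintro ⟨w, hw⟩
    refine ⟨-w, ?_⟩
    push_cast at hw ⊢
    rw [← haa, ← hbb] at hw
    apply mul_left_cancel₀ hPrM
    linear_combination -hw + (M:ℤ) * w * hpow

lemma aux_memK {p M r : ℕ} {g : SL(2,ℤ)} (hg : g ∈ Gamma0 (p ^ r * M)) :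
    ((p:ℤ) ^ r * M) ∣ g 1 0 := by
  have := aux_gamma0_iff_dvd.mp hg
  push_cast at this
  exact this

lemma aux_index (p n M r : ℕ) (hp : p.Prime) (hM : 0 < M)
    (hr1 : 1 ≤ r) (hr2 : r ≤ n) :
    (Gamma0 (p ^ n * M)).relIndex (Gamma0 (p ^ r * M)) = p ^ (n - r) := by
  haveI : NeZero (p ^ (n - r)) := ⟨(pow_pos hp.pos _).ne'⟩
  rw [Subgroup.relIndex, Subgroup.index_eq_card, ← Nat.card_zmod (p ^ (n - r))]
  have hp0 : (0:ℤ) < (p:ℤ) := by exact_mod_cast hp.pos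
  have hM0 : (0:ℤ) < (M:ℤ) := by exact_mod_cast hM
  have hPrM : ((p:ℤ)^r * (M:ℤ)) ≠ 0 := by positivity
  refine Nat.card_congr (Equiv.ofBijective
    (fun q => Quotient.liftOn' q (fun g => auxPsi p n M r (g : SL(2,ℤ))) ?_) ⟨?_, ?_⟩)
  · intro x y hxy
    have h1 := QuotientGroup.leftRel_apply.mp hxy
    have h2 : ((x : SL(2,ℤ)))⁻¹ * (y : SL(2,ℤ)) ∈ Gamma0 (p ^ n * M) := by
      have := Subgroup.mem_subgroupOf.mp h1
      simpa using this
    exact (aux_char p n M r hp hM hr1 hr2 _ _ (aux_memK x.2) (aux_memK y.2)).mpr h2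
  · intro q1 q2
    refine Quotient.inductionOn₂' q1 q2 (fun x y h => ?_)
    refine Quotient.sound' (QuotientGroup.leftRel_apply.mpr ?_)
    refine Subgroup.mem_subgroupOf.mpr ?_
    have h2 := (aux_char p n M r hp hM hr1 hr2 _ _ (aux_memK x.2) (aux_memK y.2)).mp h
    simpa using h2
  · intro x
    set c : ℤ := ((p:ℤ)^r * M) * (x.val : ℤ) with hc
    have hdet : Matrix.det !![(1:ℤ), 0; c, 1] = 1 := by
      rw [Matrix.det_fin_two_of]; ring
    set g : SL(2,ℤ) := ⟨!![(1:ℤ), 0; c, 1], hdet⟩ with hg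
    have hg10 : g 1 0 = c := by rfl
    have hg00 : g 0 0 = 1 := by rfl
    have hgK : g ∈ Gamma0 (p ^ r * M) := by
      rw [aux_gamma0_iff_dvd, hg10, hc]
      push_cast
      exact Dvd.intro _ rfl
    refine ⟨Quotient.mk'' ⟨g, hgK⟩, ?_⟩
    show auxPsi p n M r g = x
    rw [auxPsi, hg10, hg00, hc, Int.mul_ediv_cancel_left _ hPrM]
    push_cast
    simp


lemma aux_rep (p n M r : ℕ) (hp : p.Prime) (hpM : ¬ p ∣ M) (hM : 0 < M)
    (hr1 : 1 ≤ r) (hr2 : r ≤ n) {c d : ℤ}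
    (hc : ((p:ℤ) ^ r * M) ∣ c) (hcd : IsCoprime c d)
    (hnc : ¬ ((p:ℤ) ^ n * M) ∣ c) :
    ∃ j s : ℕ, r ≤ j ∧ j ≤ n - 1 ∧ s < p ^ (n - j) ∧ ¬ p ∣ s ∧
      IsCoprime ((p:ℤ) ^ j * M) ((p:ℤ) ^ (n - j) - s * M) ∧
      ((p:ℤ) ^ n * M) ∣ c * ((p:ℤ) ^ (n - j) - (s:ℤ) * M) - d * ((p:ℤ) ^ j * M) := by
  have hpI : Prime (p:ℤ) := Int.prime_iff_natAbs_prime.mpr (by simpa using hp)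
  have hpMZ : ¬ (p:ℤ) ∣ (M:ℤ) := by exact_mod_cast hpM
  obtain ⟨t, ht⟩ := hc
  have hc0 : c ≠ 0 := fun h => hnc (h ▸ dvd_zero _)
  have ht0 : t ≠ 0 := by rintro rfl; rw [mul_zero] at ht; exact hc0 ht
  obtain ⟨k, u, hpu, hu⟩ :=
    Nat.exists_eq_pow_mul_and_not_dvd (Int.natAbs_ne_zero.mpr ht0) p hp.ne_one
  have hut : ∃ u' : ℤ, t = (p:ℤ)^k * u' ∧ ¬ (p:ℤ) ∣ u' := by
    rcases Int.natAbs_eq t with h | h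
    · exact ⟨u, by rw [h, hu]; push_cast; ring, by exact_mod_cast hpu⟩
    · refine ⟨-u, by rw [h, hu]; push_cast; ring, ?_⟩
      rw [dvd_neg]; exact_mod_cast hpu
  obtain ⟨u', htu, hpu'⟩ := hut
  set j := r + k with hj
  have hcj : c = (p:ℤ)^j * M * u' := by rw [ht, htu, hj]; push_cast; ring
  have hjn : j < n := by
    by_contra h
    push_neg at h
    refine hnc ⟨(p:ℤ)^(j-n) * u', ?_⟩
    rw [hcj, show (p:ℤ)^j = (p:ℤ)^n * (p:ℤ)^(j-n) by rw [← pow_add, Nat.add_sub_cancel' h]]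
    ring
  have hpc : (p:ℤ) ∣ c := by
    rw [hcj]
    exact dvd_mul_of_dvd_left (dvd_mul_of_dvd_left (dvd_pow_self _ (by omega)) _) _
  have hpd : ¬ (p:ℤ) ∣ d := fun hd => hpI.not_unit (hcd.isUnit_of_dvd' hpc hd)
  have hcopuM : IsCoprime ((p:ℤ)) (u' * M) := hpI.coprime_iff_not_dvd.mpr (by
    rw [hpI.dvd_mul]; rintro (h|h) <;> [exact hpu' h; exact hpMZ h])
  have hcop2 : IsCoprime (u' * (M:ℤ)) ((p:ℤ)^(n-j)) :=
    (IsCoprime.pow_left hcopuM).symm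
  obtain ⟨a, b, hab⟩ := hcop2
  -- a * (u'*M) + b * p^(n-j) = 1
  set P : ℤ := (p:ℤ)^(n-j) with hP
  have hP0 : 0 < P := pow_pos (by exact_mod_cast hp.pos) _
  set sZ : ℤ := (-d * a) % P with hsZ
  have hs0 : 0 ≤ sZ := Int.emod_nonneg _ (ne_of_gt hP0)
  have hsP : sZ < P := Int.emod_lt_of_pos _ hP0
  set q : ℤ := (-d * a) / P with hq
  have hmod : sZ = -d * a - P * q := by rw [hsZ, hq, Int.emod_def]
  have he : u' * M * sZ + d = P * (d * b - u' * M * q) := by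
    rw [hmod]; linear_combination (-d) * hab
  set s : ℕ := sZ.toNat with hs
  have hsZs : (s:ℤ) = sZ := Int.toNat_of_nonneg hs0
  have hsnat : s < p ^ (n - j) := by
    have : (P:ℤ) = ((p^(n-j) : ℕ) : ℤ) := by push_cast; rfl
    omega
  have hps : ¬ p ∣ s := by
    intro hdvd
    have h1 : (p:ℤ) ∣ sZ := by rw [← hsZs]; exact_mod_cast hdvd
    have h2 : (p:ℤ) ∣ P := dvd_pow_self _ (by omega)
    have h3 : (p:ℤ) ∣ u' * M * sZ + d := he ▸ h2.mul_right _
    have : (p:ℤ) ∣ d := by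
      have h4 := dvd_sub h3 (h1.mul_left (u' * M))
      simpa using h4
    exact hpd this
  have hMs : (s:ℤ) * M = sZ * M := by rw [hsZs]
  refine ⟨j, s, by omega, by omega, hsnat, hps, ?_, ?_⟩
  · -- coprimality of bottom row
    refine IsCoprime.mul_left ?_ ?_
    · refine (IsCoprime.pow_left (hpI.coprime_iff_not_dvd.mpr ?_) : IsCoprime ((p:ℤ)^j) _)
      intro hdvd
      have h2 : (p:ℤ) ∣ P := dvd_pow_self _ (by omega)
      have h5 : (p:ℤ) ∣ (s:ℤ) * M := by
        have := dvd_sub h2 hdvd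
        rw [hP] at this
        simpa using this
      rcases hpI.dvd_mul.mp h5 with h | h
      · exact hps (by exact_mod_cast h)
      · exact hpMZ h
    · have h6 : IsCoprime ((M:ℤ)) P := (hpI.coprime_iff_not_dvd.mpr hpMZ).symm.pow_right
      have h7 := h6.add_mul_left_right (-(s:ℤ))
      rw [show P + (M:ℤ) * -(s:ℤ) = (p:ℤ)^(n-j) - (s:ℤ) * M by rw [hP]; ring] at h7
      exact h7
  · obtain ⟨e, he'⟩ : P ∣ u' * M * (s:ℤ) + d := by rw [hsZs]; exact ⟨_, he⟩
    refine ⟨u' - e, ?_⟩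
    have hpn : (p:ℤ)^n = (p:ℤ)^j * P := by
      rw [hP, ← pow_add, Nat.add_sub_cancel' (le_of_lt hjn)]
    rw [hcj, hpn]
    linear_combination (-((p:ℤ)^j * (M:ℤ))) * he'


lemma aux_distinct (p n M : ℕ) (hp : p.Prime) (hpM : ¬ p ∣ M) (hM : 0 < M) (hn : 2 ≤ n)
    (j s j' s' : ℕ) (hjn : j ≤ n - 1) (hj'n : j' ≤ n - 1)
    (hs : s < p ^ (n - j)) (hs' : s' < p ^ (n - j'))
    (hps : ¬ p ∣ s) (hps' : ¬ p ∣ s') (hjj' : j ≤ j')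
    (hdvd : ((p:ℤ)^n * M) ∣
      ((p:ℤ)^j * M) * ((p:ℤ)^(n-j') - (s':ℤ) * M) - ((p:ℤ)^(n-j) - (s:ℤ) * M) * ((p:ℤ)^j' * M)) :
    j = j' ∧ s = s' := by
  have hpI : Prime (p:ℤ) := Int.prime_iff_natAbs_prime.mpr (by simpa using hp)
  have hpMZ : ¬ (p:ℤ) ∣ (M:ℤ) := by exact_mod_cast hpM
  have hM0 : (M:ℤ) ≠ 0 := by exact_mod_cast hM.ne'
  have hp0 : (p:ℤ) ≠ 0 := by exact_mod_cast hp.ne_zero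
  obtain ⟨e, he⟩ := hdvd
  have hjeq : j = j' := by
    by_contra hne
    have hlt : j < j' := lt_of_le_of_ne hjj' hne
    have key : (s':ℤ)*M*M*(p:ℤ)^j =
        ((p:ℤ)^j*(p:ℤ)^(n-j'))*M - ((p:ℤ)^(n-j)*(p:ℤ)^j')*M
          + ((s:ℤ)*(p:ℤ)^j')*(M*M) - (p:ℤ)^n*(M*e) := by
      linear_combination -he
    have h5 : (p:ℤ)^(j+1) ∣ (s':ℤ)*M*M*(p:ℤ)^j := by
      rw [key]
      refine dvd_sub (dvd_add (dvd_sub ?_ ?_) ?_) ?_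
      · exact Dvd.dvd.mul_right (by rw [← pow_add]; exact pow_dvd_pow _ (by omega)) _
      · exact Dvd.dvd.mul_right (by rw [← pow_add]; exact pow_dvd_pow _ (by omega)) _
      · exact Dvd.dvd.mul_right (Dvd.dvd.mul_left (pow_dvd_pow _ (by omega)) _) _
      · exact Dvd.dvd.mul_right (pow_dvd_pow _ (by omega)) _
    obtain ⟨f, hf⟩ := h5
    have hcan : (s':ℤ)*M*M = (p:ℤ) * f := by
      have h6 : ((s':ℤ)*M*M) * (p:ℤ)^j = ((p:ℤ) * f) * (p:ℤ)^j := by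
        rw [hf]; ring
      exact mul_right_cancel₀ (pow_ne_zero j hp0) h6
    have h7 : (p:ℤ) ∣ (s':ℤ)*M*M := ⟨f, hcan⟩
    rcases hpI.dvd_mul.mp h7 with h | h
    · rcases hpI.dvd_mul.mp h with h | h
      · exact hps' (by exact_mod_cast h)
      · exact hpMZ h
    · exact hpMZ h
  subst hjeq
  refine ⟨rfl, ?_⟩
  -- now p^n M ∣ p^j M^2 (s - s')
  have hjn2 : j < n := by omega
  have hpn : (p:ℤ)^n = (p:ℤ)^j * (p:ℤ)^(n-j) := by rw [← pow_add, Nat.add_sub_cancel' (le_of_lt hjn2)]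
  have hcan : (M:ℤ) * ((s:ℤ) - (s':ℤ)) = (p:ℤ)^(n-j) * e := by
    have h6 : ((p:ℤ)^j * M) * ((M:ℤ) * ((s:ℤ) - (s':ℤ))) = ((p:ℤ)^j * M) * ((p:ℤ)^(n-j) * e) := by
      rw [hpn] at he; linear_combination he
    exact mul_left_cancel₀ (by positivity) h6
  have hcop : IsCoprime ((p:ℤ)^(n-j)) (M:ℤ) :=
    IsCoprime.pow_left (hpI.coprime_iff_not_dvd.mpr hpMZ)
  have hdvd2 : ((p:ℤ)^(n-j)) ∣ ((s:ℤ) - (s':ℤ)) := hcop.dvd_of_dvd_mul_left ⟨e, hcan⟩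
  have habs : |(s:ℤ) - (s':ℤ)| < (p:ℤ)^(n-j) := by
    rw [abs_sub_lt_iff]
    have h1 : ((s:ℤ)) < ((p^(n-j) : ℕ) : ℤ) := by exact_mod_cast hs
    have h2 : ((s':ℤ)) < ((p^(n-j) : ℕ) : ℤ) := by exact_mod_cast hs'
    push_cast at h1 h2
    constructor <;> [omega; omega]
  have := Int.eq_zero_of_abs_lt_dvd hdvd2 habs
  omega

lemma aux_mul_inv_entry (g A : SL(2, ℤ)) :
    (g * A⁻¹) 1 0 = g 1 0 * A 1 1 - g 1 1 * A 1 0 := by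
  rw [Matrix.SpecialLinearGroup.SL2_inv_expl A]
  have h := (Matrix.two_mul_expl g.1 (⟨![![A.1 1 1, -A.1 0 1], ![-A.1 1 0, A.1 0 0]],
    Matrix.SpecialLinearGroup.SL2_inv_expl_det A⟩ : SL(2,ℤ)).1).2.2.1
  simp only [Matrix.SpecialLinearGroup.coe_mul] at *
  change (_ * _ : Matrix (Fin 2) (Fin 2) ℤ) 1 0 = _
  rw [h]
  simp
  ring

end auxstmt14

set_option maxHeartbeats 1000000 in
/-- Right coset representatives of `Γ₀(pⁿM)` in `Γ₀(p^rM)`: the identity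
together with the matrices `A_{s,j} = [[a,b],[p^j M, p^{n-j} - sM]]` for
`r ≤ j ≤ n-1` and `s` ranging over `ℤ_p^*/(1+p^{n-j}ℤ_p)` (represented by
naturals `s < p^{n-j}` with `p ∤ s`); in particular the index is `p^{n-r}`. -/
theorem stmt14 (p n M r : ℕ) (hp : p.Prime) (hpM : ¬ p ∣ M) (hM : 0 < M)
    (hn : 2 ≤ n) (hr1 : 1 ≤ r) (hr2 : r ≤ n) :
    -- every element of Γ₀(p^r M) lies in one of the listed cosets
    (∀ g : SL(2, ℤ), g ∈ Gamma0 (p ^ r * M) →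
      g ∈ Gamma0 (p ^ n * M) ∨
      ∃ j s : ℕ, r ≤ j ∧ j ≤ n - 1 ∧ s < p ^ (n - j) ∧ ¬ p ∣ s ∧
        ∃ A : SL(2, ℤ), A 1 0 = (p : ℤ) ^ j * M ∧
          A 1 1 = (p : ℤ) ^ (n - j) - s * M ∧ g * A⁻¹ ∈ Gamma0 (p ^ n * M)) ∧
    -- the listed cosets are distinct from the trivial coset …
    (∀ j s : ℕ, r ≤ j → j ≤ n - 1 → s < p ^ (n - j) → ¬ p ∣ s →
      ∀ A : SL(2, ℤ), A 1 0 = (p : ℤ) ^ j * M →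
        A 1 1 = (p : ℤ) ^ (n - j) - s * M → A ∉ Gamma0 (p ^ n * M)) ∧
    -- … and pairwise distinct
    (∀ j s j' s' : ℕ, r ≤ j → j ≤ n - 1 → s < p ^ (n - j) → ¬ p ∣ s →
      r ≤ j' → j' ≤ n - 1 → s' < p ^ (n - j') → ¬ p ∣ s' →
      ∀ A A' : SL(2, ℤ),
        A 1 0 = (p : ℤ) ^ j * M → A 1 1 = (p : ℤ) ^ (n - j) - s * M →
        A' 1 0 = (p : ℤ) ^ j' * M → A' 1 1 = (p : ℤ) ^ (n - j') - s' * M →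
        A * A'⁻¹ ∈ Gamma0 (p ^ n * M) → j = j' ∧ s = s') ∧
    -- the index of Γ₀(pⁿM) in Γ₀(p^rM) is p^{n-r}
    (Gamma0 (p ^ n * M)).relIndex (Gamma0 (p ^ r * M)) = p ^ (n - r) := by
  refine ⟨?_, ?_, ?_, aux_index p n M r hp hM hr1 hr2⟩
  · -- part 1
    intro g hg
    by_cases hmem : g ∈ Gamma0 (p ^ n * M)
    · exact Or.inl hmem
    right
    have hc : ((p:ℤ) ^ r * M) ∣ g 1 0 := aux_memK hg
    have hnc : ¬ ((p:ℤ) ^ n * M) ∣ g 1 0 := by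
      intro h
      refine hmem (aux_gamma0_iff_dvd.mpr ?_)
      push_cast
      exact h
    have hdet : g 0 0 * g 1 1 - g 0 1 * g 1 0 = 1 := by
      have h2 := g.2; rw [Matrix.det_fin_two] at h2; exact h2
    have hcd : IsCoprime (g 1 0) (g 1 1) :=
      ⟨-(g 0 1), g 0 0, by linear_combination hdet⟩
    obtain ⟨j, s, hj1, hj2, hs1, hs2, hcop, hdvd⟩ :=
      aux_rep p n M r hp hpM hM hr1 hr2 hc hcd hnc
    obtain ⟨aa, bb, hab⟩ := hcop
    refine ⟨j, s, hj1, hj2, hs1, hs2,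
      ⟨!![bb, -aa; (p:ℤ)^j * M, (p:ℤ)^(n-j) - (s:ℤ) * M],
        by rw [Matrix.det_fin_two_of]; linear_combination hab⟩, rfl, rfl, ?_⟩
    rw [aux_gamma0_iff_dvd]
    erw [aux_mul_inv_entry]
    push_cast
    exact hdvd
  · -- part 2
    intro j s hj1 hj2 hs1 hs2 A hA10 hA11 hmem
    have h0 := aux_gamma0_iff_dvd.mp hmem
    rw [hA10] at h0
    have h1 : ((p^n*M : ℕ) : ℤ) ∣ ((p^j*M : ℕ) : ℤ) := by push_cast; push_cast at h0; exact h0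
    have h2 : p^n*M ∣ p^j*M := Int.natCast_dvd_natCast.mp h1
    have h3 : p^n*M ≤ p^j*M := Nat.le_of_dvd (Nat.mul_pos (pow_pos hp.pos j) hM) h2
    have h4 : p^n ≤ p^j := Nat.le_of_mul_le_mul_right h3 hM
    have h5 : n ≤ j := (Nat.pow_le_pow_iff_right hp.one_lt).mp h4
    omega
  · -- part 3
    intro j s j' s' hj1 hj2 hs1 hs2 hj'1 hj'2 hs'1 hs'2 A A' hA10 hA11 hA'10 hA'11 hmem
    have h0 := aux_gamma0_iff_dvd.mp hmem
    rw [aux_mul_inv_entry, hA10, hA11, hA'10, hA'11] at h0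
    push_cast at h0
    rcases le_total j j' with h | h
    · exact aux_distinct p n M hp hpM hM hn j s j' s' hj2 hj'2 hs1 hs'1 hs2 hs'2 h h0
    · have hswap : ((p:ℤ)^n * M) ∣
          ((p:ℤ)^j' * M) * ((p:ℤ)^(n-j) - (s:ℤ) * M)
            - ((p:ℤ)^(n-j') - (s':ℤ) * M) * ((p:ℤ)^j * M) := by
        have heq : ((p:ℤ)^j' * M) * ((p:ℤ)^(n-j) - (s:ℤ) * M)
            - ((p:ℤ)^(n-j') - (s':ℤ) * M) * ((p:ℤ)^j * M)
            = -(((p:ℤ)^j * M) * ((p:ℤ)^(n-j') - (s':ℤ) * M)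
              - ((p:ℤ)^(n-j) - (s:ℤ) * M) * ((p:ℤ)^j' * M)) := by ring
        rw [heq]
        exact dvd_neg.mpr h0
      obtain ⟨h1, h2⟩ :=
        aux_distinct p n M hp hpM hM hn j' s' j s hj'2 hj2 hs'1 hs1 hs'2 hs2 h hswap
      exact ⟨h1.symm, h2.symm⟩
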